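/- Let n ≥ 1, f, h: [0,1]ⁿ → ℝ twice continuously differentiable with supremum norm bounds a = ‖f‖_∞, bᵢ = ‖∂f/∂xᵢ‖_∞, cᵢᵢ = ‖∂²f/∂xᵢ²‖_∞, α = ‖h‖_∞, βᵢ = ‖∂h/∂xᵢ‖_∞, γᵢᵢ = ‖∂²h/∂xᵢ²‖_∞. Let t > 0 and define F^c = log Σ_{x∈{0,1}ⁿ : |h(x)|≤tn} e^{f(x)}. Set δ₀ = (√6/n)(Σᵢ(αγᵢᵢ+βᵢ²))^{1/2}, ε₀ = 2√(6/n), η₀ = (√6/n)(Σᵢ(acᵢᵢ+bᵢ²))^{1/2}, and I(x) = Σᵢ(xᵢ log xᵢ + (1-xᵢ)log(1-xᵢ)). Then F^c ≥ sup_{x∈[0,1]ⁿ : |h(x)|≤(t-δ₀)n} (f(x) - I(x)) - ε₀n - η₀n - log 2. -/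

import Mathlib

def boolToReal {n : ℕ} (x : Fin n → Bool) : Fin n → ℝ := fun i => if x i then 1 else 0

namespace CNLB

variable {n : ℕ}

noncomputable def w (y : Fin n → ℝ) (i : Fin n) (b : Bool) : ℝ := if b then y i else 1 - y i

noncomputable def pr (y : Fin n → ℝ) (x : Fin n → Bool) : ℝ := ∏ i, w y i (x i)

lemma pr_nonneg {y : Fin n → ℝ} (hy : ∀ i, y i ∈ Set.Icc (0:ℝ) 1) (x : Fin n → Bool) :
    0 ≤ pr y x := by
  apply Finset.prod_nonneg
  intro i _
  rcases (hy i) with ⟨h0, h1⟩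
  cases x i <;> simp [w] <;> linarith

lemma sum_pr (y : Fin n → ℝ) : ∑ x : Fin n → Bool, pr y x = 1 := by
  unfold pr
  rw [← Fintype.piFinset_univ, ← Finset.prod_univ_sum (fun _ => Finset.univ) (fun i b => w y i b)]
  have h1 : ∀ i : Fin n, ∑ b : Bool, w y i b = 1 := by
    intro i; simp [w]
  rw [Finset.prod_congr rfl (fun i _ => h1 i)]
  simp

lemma half_sum (F : (Fin n → Bool) → ℝ) (k : Fin n) :
    ∑ x : Fin n → Bool, (F (Function.update x k true) + F (Function.update x k false))
      = 2 * ∑ x : Fin n → Bool, F x := by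
  have inv : Function.Involutive (fun x : Fin n → Bool => Function.update x k (!x k)) := by
    intro x
    simp [Function.update_idem, Function.update_self]
  have key : ∀ x : Fin n → Bool,
      F (Function.update x k true) + F (Function.update x k false)
        = F x + F (Function.update x k (!x k)) := by
    intro x
    cases hxk : x k
    · have : Function.update x k false = x := by
        rw [← hxk]; exact Function.update_eq_self k x
      rw [this]; simp [hxk]; ring
    · have : Function.update x k true = x := by
        rw [← hxk]; exact Function.update_eq_self k x
      rw [this]; simp [hxk]
  rw [Finset.sum_congr rfl (fun x _ => key x), Finset.sum_add_distrib]
  have := Equiv.sum_comp inv.toPerm F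
  simp only [Function.Involutive.coe_toPerm] at this
  rw [this]; ring

lemma pr_update (y : Fin n → ℝ) (x : Fin n → Bool) (k : Fin n) (b : Bool) :
    pr y (Function.update x k b) = w y k b * ∏ i ∈ Finset.univ.erase k, w y i (x i) := by
  unfold pr
  rw [← Finset.mul_prod_erase Finset.univ _ (Finset.mem_univ k)]
  congr 1
  · rw [Function.update_self]
  · exact Finset.prod_congr rfl (fun i hi =>
      by rw [Function.update_of_ne (Finset.ne_of_mem_erase hi)])

/-- Conditioning on coordinate `k`. -/
lemma cond (y : Fin n → ℝ) (k : Fin n) (φ : (Fin n → Bool) → ℝ) :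
    ∑ x : Fin n → Bool, pr y x * φ x
      = ∑ x : Fin n → Bool, pr y x *
        (y k * φ (Function.update x k true) + (1 - y k) * φ (Function.update x k false)) := by
  have h1 := half_sum (fun x => pr y x * φ x) k
  have h2 := half_sum (fun x => pr y x *
        (y k * φ (Function.update x k true) + (1 - y k) * φ (Function.update x k false))) k
  have key : ∀ x : Fin n → Bool,
      pr y (Function.update x k true) * φ (Function.update x k true)
        + pr y (Function.update x k false) * φ (Function.update x k false)
      = pr y (Function.update x k true) *
          (y k * φ (Function.update (Function.update x k true) k true)
            + (1 - y k) * φ (Function.update (Function.update x k true) k false))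
        + pr y (Function.update x k false) *
          (y k * φ (Function.update (Function.update x k false) k true)
            + (1 - y k) * φ (Function.update (Function.update x k false) k false)) := by
    intro x
    simp only [Function.update_idem, pr_update]
    simp [w]
    ring
  have : ∑ x : Fin n → Bool,
      (pr y (Function.update x k true) * φ (Function.update x k true)
        + pr y (Function.update x k false) * φ (Function.update x k false))
      = ∑ x : Fin n → Bool,
      (pr y (Function.update x k true) *
          (y k * φ (Function.update (Function.update x k true) k true)
            + (1 - y k) * φ (Function.update (Function.update x k true) k false))
        + pr y (Function.update x k false) *
          (y k * φ (Function.update (Function.update x k false) k true)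
            + (1 - y k) * φ (Function.update (Function.update x k false) k false))) :=
    Finset.sum_congr rfl (fun x _ => key x)
  rw [h1, h2] at this
  linarith

/-- Expectation of a function of a single coordinate. -/
lemma eval_coord (y : Fin n → ℝ) (k : Fin n) (u : Bool → ℝ) :
    ∑ x : Fin n → Bool, pr y x * u (x k) = y k * u true + (1 - y k) * u false := by
  rw [cond y k (fun x => u (x k))]
  simp only [Function.update_self]
  rw [← Finset.sum_mul, sum_pr, one_mul]

/-- Chebyshev-type bound. -/
lemma cheb {y : Fin n → ℝ} (hy : ∀ i, y i ∈ Set.Icc (0:ℝ) 1)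
    (g : (Fin n → Bool) → ℝ) (V s : ℝ) (hs0 : 0 ≤ s)
    (hV : ∑ x : Fin n → Bool, pr y x * (g x)^2 ≤ V) (hs : 6 * V ≤ s^2) :
    ∑ x ∈ Finset.univ.filter (fun x => s < |g x|), pr y x ≤ 1/6 := by
  have hnn : ∀ x : Fin n → Bool, 0 ≤ pr y x * (g x)^2 :=
    fun x => mul_nonneg (pr_nonneg hy x) (sq_nonneg _)
  have hfil : ∑ x ∈ Finset.univ.filter (fun x => s < |g x|), pr y x * (g x)^2
      ≤ ∑ x : Fin n → Bool, pr y x * (g x)^2 :=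
    Finset.sum_le_sum_of_subset_of_nonneg (Finset.filter_subset _ _)
      (fun x _ _ => hnn x)
  have hptw : ∀ x ∈ Finset.univ.filter (fun x => s < |g x|),
      s^2 * pr y x ≤ pr y x * (g x)^2 := by
    intro x hx
    rw [Finset.mem_filter] at hx
    have h1 : s ≤ |g x| := le_of_lt hx.2
    have h2 : s^2 ≤ (g x)^2 := by
      rw [← sq_abs (g x)]
      exact pow_le_pow_left₀ hs0 h1 2
    calc s^2 * pr y x ≤ (g x)^2 * pr y x := by
          exact mul_le_mul_of_nonneg_right h2 (pr_nonneg hy x)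
      _ = pr y x * (g x)^2 := by ring
  have hsum : s^2 * ∑ x ∈ Finset.univ.filter (fun x => s < |g x|), pr y x ≤ V := by
    rw [Finset.mul_sum]
    exact le_trans (le_trans (Finset.sum_le_sum hptw) hfil) hV
  rcases eq_or_lt_of_le hs0 with hzero | hpos
  · -- s = 0 : every bad point has pr = 0
    have : ∀ x ∈ Finset.univ.filter (fun x => s < |g x|), pr y x = 0 := by
      intro x hx
      rw [Finset.mem_filter] at hx
      have hgx : g x ≠ 0 := by
        intro h0; rw [h0] at hx; simp [← hzero] at hx
      by_contra hpr
      have hprpos : 0 < pr y x := lt_of_le_of_ne (pr_nonneg hy x) (Ne.symm hpr)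
      have : 0 < pr y x * (g x)^2 := mul_pos hprpos (by positivity)
      have hle : pr y x * (g x)^2 ≤ 0 := by
        have hV0 : V ≤ 0 := by nlinarith
        have := Finset.single_le_sum (fun x _ => hnn x) (Finset.mem_univ x)
        linarith
      linarith
    rw [Finset.sum_congr rfl this]
    simp
  · have hs2 : 0 < s^2 := by positivity
    have h6 : (0:ℝ) < 6 := by norm_num
    rw [← le_div_iff₀' hs2] at hsum
    calc ∑ x ∈ Finset.univ.filter (fun x => s < |g x|), pr y x ≤ V / s^2 := hsum
      _ ≤ 1/6 := by
          rw [div_le_div_iff₀ hs2 h6] at *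
          nlinarith

/-- Telescoping second-moment bound. -/
lemma tele {y : Fin n → ℝ} (hy : ∀ i, y i ∈ Set.Icc (0:ℝ) 1)
    (Φ : ℕ → (Fin n → Bool) → ℝ) (B σ : Fin n → ℝ)
    (h0 : ∀ x, Φ 0 x = 0)
    (hdep : ∀ (k : Fin n) (x : Fin n → Bool) (b : Bool),
      Φ k.1 (Function.update x k b) = Φ k.1 x)
    (hdiff : ∀ (k : Fin n) (x : Fin n → Bool),
      |Φ (k.1+1) x - Φ k.1 x| ≤ B k * |boolToReal x k - y k|)
    (hdrift : ∀ (k : Fin n) (x : Fin n → Bool),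
      |Φ k.1 x * (y k * Φ (k.1+1) (Function.update x k true)
        + (1 - y k) * Φ (k.1+1) (Function.update x k false) - Φ k.1 x)| ≤ σ k) :
    ∑ x : Fin n → Bool, pr y x * (Φ n x)^2
      ≤ ∑ k : Fin n, ((B k)^2 * (y k * (1 - y k)) + 2 * σ k) := by
  -- bound sequence on ℕ
  set T : ℕ → ℝ := fun k => if h : k < n then
      (B ⟨k, h⟩)^2 * (y ⟨k, h⟩ * (1 - y ⟨k, h⟩)) + 2 * σ ⟨k, h⟩ else 0 with hT
  have main : ∀ m, m ≤ n → ∑ x : Fin n → Bool, pr y x * (Φ m x)^2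
      ≤ ∑ k ∈ Finset.range m, T k := by
    intro m
    induction m with
    | zero => intro _; simp [h0]
    | succ m ih =>
      intro hm
      have hmn : m < n := hm
      have ihm := ih (le_of_lt hmn)
      set k : Fin n := ⟨m, hmn⟩ with hk
      -- pointwise algebra: a² = b² + (a-b)² + 2b(a-b)
      have alg : ∀ x : Fin n → Bool, pr y x * (Φ (m+1) x)^2
          = pr y x * (Φ m x)^2 + pr y x * (Φ (m+1) x - Φ m x)^2
            + 2 * (pr y x * (Φ m x * (Φ (m+1) x - Φ m x))) := by
        intro x; ring
      rw [Finset.sum_congr rfl (fun x _ => alg x), Finset.sum_add_distrib,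
        Finset.sum_add_distrib]
      -- second term: E[D²] ≤ B² E[(x̃-y)²]
      have hD2 : ∑ x : Fin n → Bool, pr y x * (Φ (m+1) x - Φ m x)^2
          ≤ (B k)^2 * (y k * (1 - y k)) := by
        have hptw : ∀ x : Fin n → Bool, pr y x * (Φ (m+1) x - Φ m x)^2
            ≤ pr y x * ((B k)^2 * (boolToReal x k - y k)^2) := by
          intro x
          apply mul_le_mul_of_nonneg_left _ (pr_nonneg hy x)
          have h1 := hdiff k x
          have h2 : |Φ (m+1) x - Φ m x|^2 ≤ (B k * |boolToReal x k - y k|)^2 :=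
            pow_le_pow_left₀ (abs_nonneg _) h1 2
          calc (Φ (m+1) x - Φ m x)^2 = |Φ (m+1) x - Φ m x|^2 := (sq_abs _).symm
            _ ≤ (B k * |boolToReal x k - y k|)^2 := h2
            _ = (B k)^2 * (boolToReal x k - y k)^2 := by
                rw [mul_pow, sq_abs]
        calc ∑ x : Fin n → Bool, pr y x * (Φ (m+1) x - Φ m x)^2
            ≤ ∑ x : Fin n → Bool, pr y x * ((B k)^2 * (boolToReal x k - y k)^2) :=
              Finset.sum_le_sum (fun x _ => hptw x)
          _ = (B k)^2 * ∑ x : Fin n → Bool, pr y x * (((if x k then (1:ℝ) else 0)) - y k)^2 := by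
              rw [Finset.mul_sum]
              exact Finset.sum_congr rfl (fun x _ => by unfold boolToReal; ring)
          _ = (B k)^2 * (y k * ((1:ℝ) - y k)^2 + (1 - y k) * ((0:ℝ) - y k)^2) := by
              rw [eval_coord y k (fun b => ((if b then (1:ℝ) else 0) - y k)^2)]
              norm_num
          _ = (B k)^2 * (y k * (1 - y k)) := by ring
      -- cross term
      have hcross : ∑ x : Fin n → Bool, pr y x * (Φ m x * (Φ (m+1) x - Φ m x))
          ≤ σ k := by
        rw [cond y k (fun x => Φ m x * (Φ (m+1) x - Φ m x))]
        have hptw : ∀ x : Fin n → Bool,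
            pr y x * (y k * (Φ m (Function.update x k true) *
                (Φ (m+1) (Function.update x k true) - Φ m (Function.update x k true)))
              + (1 - y k) * (Φ m (Function.update x k false) *
                (Φ (m+1) (Function.update x k false) - Φ m (Function.update x k false))))
            ≤ pr y x * σ k := by
          intro x
          apply mul_le_mul_of_nonneg_left _ (pr_nonneg hy x)
          have hd := hdrift k x
          have e1 : Φ m (Function.update x k true) = Φ m x := hdep k x true
          have e2 : Φ m (Function.update x k false) = Φ m x := hdep k x false
          rw [e1, e2]
          have : y k * (Φ m x * (Φ (m+1) (Function.update x k true) - Φ m x))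
              + (1 - y k) * (Φ m x * (Φ (m+1) (Function.update x k false) - Φ m x))
              = Φ m x * (y k * Φ (m+1) (Function.update x k true)
                + (1 - y k) * Φ (m+1) (Function.update x k false) - Φ m x) := by ring
          rw [this]
          exact le_trans (le_abs_self _) hd
        calc ∑ x : Fin n → Bool, pr y x * _ ≤ ∑ x : Fin n → Bool, pr y x * σ k :=
              Finset.sum_le_sum (fun x _ => hptw x)
          _ = σ k := by rw [← Finset.sum_mul, sum_pr, one_mul]
      have hTm : T m = (B k)^2 * (y k * (1 - y k)) + 2 * σ k := by
        rw [hT]; simp [hmn, hk]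
      rw [Finset.sum_range_succ, hTm]
      have hc2 : ∑ x : Fin n → Bool, 2 * (pr y x * (Φ m x * (Φ (m+1) x - Φ m x)))
          = 2 * ∑ x : Fin n → Bool, pr y x * (Φ m x * (Φ (m+1) x - Φ m x)) := by
        rw [Finset.mul_sum]
      rw [hc2]
      linarith
  have hfin := main n (le_refl n)
  have heq : ∑ k ∈ Finset.range n, T k
      = ∑ k : Fin n, ((B k)^2 * (y k * (1 - y k)) + 2 * σ k) := by
    rw [← Fin.sum_univ_eq_sum_range T n]
    apply Finset.sum_congr rfl
    intro i _
    rw [hT]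
    simp [i.isLt]
  rw [heq] at hfin
  exact hfin

lemma update_mem_cube {z : Fin n → ℝ} (hz : z ∈ Set.Icc (0 : Fin n → ℝ) 1)
    {s : ℝ} (hs : s ∈ Set.Icc (0:ℝ) 1) (k : Fin n) :
    Function.update z k s ∈ Set.Icc (0 : Fin n → ℝ) 1 := by
  rcases hz with ⟨hz0, hz1⟩
  constructor <;> intro i <;> by_cases hik : i = k
  · subst hik; simp [Function.update_self]; exact hs.1
  · rw [Function.update_of_ne hik]; exact hz0 i
  · subst hik; simp [Function.update_self]; exact hs.2
  · rw [Function.update_of_ne hik]; exact hz1 i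

lemma curve_hasDerivAt (z : Fin n → ℝ) (k : Fin n) (s : ℝ) :
    HasDerivAt (fun s : ℝ => Function.update z k s) (Pi.single k 1) s := by
  have heq : (fun s : ℝ => Function.update z k s)
      = fun s : ℝ => Function.update z k 0 + s • (Pi.single k 1 : Fin n → ℝ) := by
    funext s
    funext i
    by_cases hik : i = k
    · subst hik
      simp [Function.update_self, Pi.single_apply]
    · simp [Function.update_of_ne hik, Pi.single_apply, hik]
  rw [heq]
  have h1 : HasDerivAt (fun s : ℝ => s • (Pi.single k 1 : Fin n → ℝ))
      ((1:ℝ) • (Pi.single k 1 : Fin n → ℝ)) s :=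
    (hasDerivAt_id s).smul_const _
  simpa using h1.const_add (Function.update z k 0)

lemma g_hasDerivAt {φ : (Fin n → ℝ) → ℝ} (hφ : Differentiable ℝ φ)
    (z : Fin n → ℝ) (k : Fin n) (s : ℝ) :
    HasDerivAt (fun s : ℝ => φ (Function.update z k s))
      (fderiv ℝ φ (Function.update z k s) (Pi.single k 1)) s :=
  ((hφ _).hasFDerivAt).comp_hasDerivAt s (curve_hasDerivAt z k s)

/-- Lipschitz bound along a coordinate from a gradient bound. -/
lemma lip_coord {φ : (Fin n → ℝ) → ℝ} (hφ : Differentiable ℝ φ) {Bk : ℝ} {k : Fin n}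
    (hB : ∀ x ∈ Set.Icc (0 : Fin n → ℝ) 1, |fderiv ℝ φ x (Pi.single k 1)| ≤ Bk)
    {z : Fin n → ℝ} (hz : z ∈ Set.Icc (0 : Fin n → ℝ) 1)
    {s s' : ℝ} (hs : s ∈ Set.Icc (0:ℝ) 1) (hs' : s' ∈ Set.Icc (0:ℝ) 1) :
    |φ (Function.update z k s) - φ (Function.update z k s')| ≤ Bk * |s - s'| := by
  have key := Convex.norm_image_sub_le_of_norm_hasDerivWithin_le
    (f := fun s : ℝ => φ (Function.update z k s))
    (f' := fun s : ℝ => fderiv ℝ φ (Function.update z k s) (Pi.single k 1))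
    (s := Set.Icc (0:ℝ) 1) (C := Bk)
    (fun u hu => (g_hasDerivAt hφ z k u).hasDerivWithinAt)
    (fun u hu => by
      rw [Real.norm_eq_abs]
      exact hB _ (update_mem_cube hz hu k))
    (convex_Icc 0 1) hs' hs
  simpa [Real.norm_eq_abs] using key

/-- Chord-versus-value (second-order Taylor-type) bound along a coordinate. -/
lemma chord_coord {φ : (Fin n → ℝ) → ℝ} (hφ : ContDiff ℝ 2 φ) {Ck : ℝ} {k : Fin n}
    (hC : ∀ x ∈ Set.Icc (0 : Fin n → ℝ) 1,
      |fderiv ℝ (fun u => fderiv ℝ φ u (Pi.single k 1)) x (Pi.single k 1)| ≤ Ck)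
    {z : Fin n → ℝ} (hz : z ∈ Set.Icc (0 : Fin n → ℝ) 1)
    {p : ℝ} (hp : p ∈ Set.Icc (0:ℝ) 1) :
    |p * φ (Function.update z k 1) + (1 - p) * φ (Function.update z k 0)
      - φ (Function.update z k p)| ≤ Ck * (p * (1 - p)) := by
  have hCk : 0 ≤ Ck := le_trans (abs_nonneg _) (hC z hz)
  have hφd : Differentiable ℝ φ := hφ.differentiable (by norm_num)
  set g : ℝ → ℝ := fun s => φ (Function.update z k s) with hgdef
  set g' : ℝ → ℝ := fun s => fderiv ℝ φ (Function.update z k s) (Pi.single k 1) with hg'def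
  have hg : ∀ s : ℝ, HasDerivAt g (g' s) s := fun s => g_hasDerivAt hφd z k s
  have hφ₂ : Differentiable ℝ (fun u => fderiv ℝ φ u (Pi.single k 1)) := by
    have h1 : ContDiff ℝ 1 (fderiv ℝ φ) := hφ.fderiv_right (by norm_num)
    exact (h1.differentiable (by norm_num)).clm_apply (differentiable_const _)
  have hg' : ∀ s : ℝ, HasDerivAt g'
      (fderiv ℝ (fun u => fderiv ℝ φ u (Pi.single k 1))
        (Function.update z k s) (Pi.single k 1)) s :=
    fun s => ((hφ₂ _).hasFDerivAt).comp_hasDerivAt s (curve_hasDerivAt z k s)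
  -- Lipschitz bound for g' on [0,1]
  have hlips : ∀ s ∈ Set.Icc (0:ℝ) 1, ∀ s' ∈ Set.Icc (0:ℝ) 1,
      |g' s - g' s'| ≤ Ck * |s - s'| := by
    intro s hs s' hs'
    have key := Convex.norm_image_sub_le_of_norm_hasDerivWithin_le
      (f := g')
      (f' := fun s : ℝ => fderiv ℝ (fun u => fderiv ℝ φ u (Pi.single k 1))
        (Function.update z k s) (Pi.single k 1))
      (s := Set.Icc (0:ℝ) 1) (C := Ck)
      (fun u hu => (hg' u).hasDerivWithinAt)
      (fun u hu => by
        rw [Real.norm_eq_abs]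
        exact hC _ (update_mem_cube hz hu k))
      (convex_Icc 0 1) hs' hs
    simpa [Real.norm_eq_abs] using key
  -- remainder on [p, 1]
  have R1 : |g 1 - g p - g' p * (1 - p)| ≤ Ck * (1 - p) * (1 - p) := by
    have hsub : Set.Icc p 1 ⊆ Set.Icc (0:ℝ) 1 := Set.Icc_subset_Icc hp.1 le_rfl
    have key := Convex.norm_image_sub_le_of_norm_hasDerivWithin_le
      (f := fun s : ℝ => g s - g' p * s)
      (f' := fun s : ℝ => g' s - g' p)
      (s := Set.Icc p 1) (C := Ck * (1 - p))
      (fun u hu => by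
        have h1 : HasDerivAt (fun s : ℝ => g s - g' p * s) (g' u - g' p) u := by
          exact ((hg u).sub ((hasDerivAt_id u).const_mul (g' p))).congr_deriv (by simp)
        exact h1.hasDerivWithinAt)
      (fun u hu => by
        rw [Real.norm_eq_abs]
        calc |g' u - g' p| ≤ Ck * |u - p| := hlips u (hsub hu) p ⟨hp.1, hp.2⟩
          _ ≤ Ck * (1 - p) := by
              apply mul_le_mul_of_nonneg_left _ hCk
              rw [abs_of_nonneg (by linarith [hu.1] : (0:ℝ) ≤ u - p)]
              linarith [hu.2])
      (convex_Icc p 1) (Set.left_mem_Icc.2 hp.2) (Set.right_mem_Icc.2 hp.2)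
    rw [Real.norm_eq_abs, Real.norm_eq_abs] at key
    have e1 : g 1 - g' p * 1 - (g p - g' p * p) = g 1 - g p - g' p * (1 - p) := by ring
    rw [e1] at key
    calc |g 1 - g p - g' p * (1 - p)| ≤ Ck * (1 - p) * |1 - p| := key
      _ = Ck * (1 - p) * (1 - p) := by
          rw [abs_of_nonneg (by linarith [hp.2] : (0:ℝ) ≤ 1 - p)]
  -- remainder on [0, p]
  have R0 : |g 0 - g p + g' p * p| ≤ Ck * p * p := by
    have hsub : Set.Icc (0:ℝ) p ⊆ Set.Icc (0:ℝ) 1 := Set.Icc_subset_Icc le_rfl hp.2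
    have key := Convex.norm_image_sub_le_of_norm_hasDerivWithin_le
      (f := fun s : ℝ => g s - g' p * s)
      (f' := fun s : ℝ => g' s - g' p)
      (s := Set.Icc (0:ℝ) p) (C := Ck * p)
      (fun u hu => by
        have h1 : HasDerivAt (fun s : ℝ => g s - g' p * s) (g' u - g' p) u := by
          exact ((hg u).sub ((hasDerivAt_id u).const_mul (g' p))).congr_deriv (by simp)
        exact h1.hasDerivWithinAt)
      (fun u hu => by
        rw [Real.norm_eq_abs]
        calc |g' u - g' p| ≤ Ck * |u - p| := hlips u (hsub hu) p ⟨hp.1, hp.2⟩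
          _ ≤ Ck * p := by
              apply mul_le_mul_of_nonneg_left _ hCk
              rw [abs_of_nonpos (by linarith [hu.2] : u - p ≤ (0:ℝ))]
              linarith [hu.1])
      (convex_Icc 0 p) (Set.right_mem_Icc.2 hp.1) (Set.left_mem_Icc.2 hp.1)
    rw [Real.norm_eq_abs, Real.norm_eq_abs] at key
    have e1 : g 0 - g' p * 0 - (g p - g' p * p) = g 0 - g p + g' p * p := by ring
    rw [e1] at key
    calc |g 0 - g p + g' p * p| ≤ Ck * p * |0 - p| := key
      _ = Ck * p * p := by
          rw [abs_of_nonpos (by linarith [hp.1] : (0:ℝ) - p ≤ 0), neg_sub]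
          ring_nf
  -- combine
  have hp0 : 0 ≤ p := hp.1
  have hp1 : 0 ≤ 1 - p := by linarith [hp.2]
  have e : p * g 1 + (1 - p) * g 0 - g p
      = p * (g 1 - g p - g' p * (1 - p)) + (1 - p) * (g 0 - g p + g' p * p) := by ring
  show |p * g 1 + (1 - p) * g 0 - g p| ≤ Ck * (p * (1 - p))
  rw [e]
  calc |p * (g 1 - g p - g' p * (1 - p)) + (1 - p) * (g 0 - g p + g' p * p)|
      ≤ |p * (g 1 - g p - g' p * (1 - p))| + |(1 - p) * (g 0 - g p + g' p * p)| :=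
        abs_add_le _ _
    _ = p * |g 1 - g p - g' p * (1 - p)| + (1 - p) * |g 0 - g p + g' p * p| := by
        rw [abs_mul, abs_mul, abs_of_nonneg hp0, abs_of_nonneg hp1]
    _ ≤ p * (Ck * (1 - p) * (1 - p)) + (1 - p) * (Ck * p * p) := by
        apply add_le_add
        · exact mul_le_mul_of_nonneg_left R1 hp0
        · exact mul_le_mul_of_nonneg_left R0 hp1
    _ = Ck * (p * (1 - p)) := by ring

noncomputable def W (y : Fin n → ℝ) (k : ℕ) (x : Fin n → Bool) : Fin n → ℝ :=
  fun i => if (i : ℕ) < k then boolToReal x i else y i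

lemma boolToReal_mem (x : Fin n → Bool) (k : Fin n) :
    boolToReal x k ∈ Set.Icc (0:ℝ) 1 := by
  unfold boolToReal
  constructor <;> split <;> norm_num

lemma W_zero (y : Fin n → ℝ) (x : Fin n → Bool) : W y 0 x = y := by
  funext i; simp [W]

lemma W_top (y : Fin n → ℝ) (x : Fin n → Bool) : W y n x = boolToReal x := by
  funext i; simp [W, i.isLt]

lemma W_mem {y : Fin n → ℝ} (hy : ∀ i, y i ∈ Set.Icc (0:ℝ) 1) (k : ℕ) (x : Fin n → Bool) :
    W y k x ∈ Set.Icc (0 : Fin n → ℝ) 1 := by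
  constructor <;> intro i <;> unfold W <;> split
  · exact (boolToReal_mem x i).1
  · exact (hy i).1
  · exact (boolToReal_mem x i).2
  · exact (hy i).2

lemma W_update (y : Fin n → ℝ) (k : Fin n) (x : Fin n → Bool) (b : Bool) :
    W y k.1 (Function.update x k b) = W y k.1 x := by
  funext i
  unfold W
  split
  · next hik =>
      have : i ≠ k := fun h => by subst h; exact lt_irrefl _ hik
      unfold boolToReal
      rw [Function.update_of_ne this]
  · rfl

lemma W_succ (y : Fin n → ℝ) (k : Fin n) (x : Fin n → Bool) :
    W y (k.1 + 1) x = Function.update (W y k.1 x) k (boolToReal x k) := by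
  funext i
  by_cases hik : i = k
  · subst hik
    rw [Function.update_self]
    simp [W]
  · rw [Function.update_of_ne hik]
    unfold W
    by_cases h1 : (i:ℕ) < k.1
    · rw [if_pos (Nat.lt_succ_of_lt h1), if_pos h1]
    · have h2 : ¬ (i:ℕ) < k.1 + 1 := by
        intro hlt
        rcases Nat.lt_succ_iff_lt_or_eq.1 hlt with hcase | hcase
        · exact h1 hcase
        · exact hik (Fin.ext hcase)
      rw [if_neg h2, if_neg h1]

lemma W_self (y : Fin n → ℝ) (k : Fin n) (x : Fin n → Bool) :
    Function.update (W y k.1 x) k (y k) = W y k.1 x := by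
  funext i
  by_cases hik : i = k
  · subst hik
    rw [Function.update_self]
    simp [W]
  · rw [Function.update_of_ne hik]

/-- The second moment bound for smooth functions (Chatterjee–Dembo style). -/
lemma secmom {y : Fin n → ℝ} (hy : ∀ i, y i ∈ Set.Icc (0:ℝ) 1)
    (φ : (Fin n → ℝ) → ℝ) (hφ : ContDiff ℝ 2 φ) (A : ℝ) (B C : Fin n → ℝ)
    (hA : ∀ x ∈ Set.Icc (0 : Fin n → ℝ) 1, |φ x| ≤ A)
    (hB : ∀ x ∈ Set.Icc (0 : Fin n → ℝ) 1, ∀ i, |fderiv ℝ φ x (Pi.single i 1)| ≤ B i)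
    (hC : ∀ x ∈ Set.Icc (0 : Fin n → ℝ) 1, ∀ i,
      |fderiv ℝ (fun z => fderiv ℝ φ z (Pi.single i 1)) x (Pi.single i 1)| ≤ C i) :
    ∑ x : Fin n → Bool, pr y x * (φ (boolToReal x) - φ y)^2
      ≤ ∑ i : Fin n, (A * C i + (B i)^2) := by
  have hφd : Differentiable ℝ φ := hφ.differentiable (by norm_num)
  have hymem : y ∈ Set.Icc (0 : Fin n → ℝ) 1 := by
    constructor <;> intro i
    · exact (hy i).1
    · exact (hy i).2
  have key := tele hy (fun k x => φ (W y k x) - φ y) B (fun k => A * C k / 2)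
    (fun x => by show φ (W y 0 x) - φ y = 0; rw [W_zero]; ring)
    (fun k x b => by
      show φ (W y k.1 (Function.update x k b)) - φ y = φ (W y k.1 x) - φ y
      rw [W_update])
    (fun k x => by
      show |φ (W y (k.1+1) x) - φ y - (φ (W y k.1 x) - φ y)|
        ≤ B k * |boolToReal x k - y k|
      have goal_eq : φ (W y (k.1+1) x) - φ y - (φ (W y k.1 x) - φ y)
          = φ (Function.update (W y k.1 x) k (boolToReal x k))
            - φ (Function.update (W y k.1 x) k (y k)) := by
        rw [W_succ y k x, W_self y k x]; ring
      rw [goal_eq]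
      exact lip_coord hφd (fun u hu => hB u hu k) (W_mem hy k.1 x)
        (boolToReal_mem x k) ⟨(hy k).1, (hy k).2⟩)
    (fun k x => by
      show |(φ (W y k.1 x) - φ y) *
          (y k * (φ (W y (k.1+1) (Function.update x k true)) - φ y)
            + (1 - y k) * (φ (W y (k.1+1) (Function.update x k false)) - φ y)
            - (φ (W y k.1 x) - φ y))| ≤ A * C k / 2
      have et : W y (k.1 + 1) (Function.update x k true)
          = Function.update (W y k.1 x) k 1 := by
        rw [W_succ y k (Function.update x k true), W_update]
        congr 1
        unfold boolToReal
        rw [Function.update_self]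
        norm_num
      have ef : W y (k.1 + 1) (Function.update x k false)
          = Function.update (W y k.1 x) k 0 := by
        rw [W_succ y k (Function.update x k false), W_update]
        congr 1
        unfold boolToReal
        rw [Function.update_self]
        norm_num
      have inner_eq : y k * (φ (W y (k.1+1) (Function.update x k true)) - φ y)
            + (1 - y k) * (φ (W y (k.1+1) (Function.update x k false)) - φ y)
            - (φ (W y k.1 x) - φ y)
          = y k * φ (Function.update (W y k.1 x) k 1)
            + (1 - y k) * φ (Function.update (W y k.1 x) k 0)
            - φ (Function.update (W y k.1 x) k (y k)) := by
        rw [et, ef, W_self y k x]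
        ring
      have hCk : 0 ≤ C k := le_trans (abs_nonneg _) (hC y hymem k)
      have hchord := chord_coord hφ (fun u hu => hC u hu k) (W_mem hy k.1 x)
        (⟨(hy k).1, (hy k).2⟩ : y k ∈ Set.Icc (0:ℝ) 1)
      have habs : |y k * (φ (W y (k.1+1) (Function.update x k true)) - φ y)
            + (1 - y k) * (φ (W y (k.1+1) (Function.update x k false)) - φ y)
            - (φ (W y k.1 x) - φ y)| ≤ C k / 4 := by
        rw [inner_eq]
        have hq : y k * (1 - y k) ≤ 1/4 := by nlinarith [sq_nonneg (y k - 1/2)]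
        exact le_trans hchord (by nlinarith)
      have hPh : |φ (W y k.1 x) - φ y| ≤ 2 * A := by
        have h1 : |φ (W y k.1 x) - φ y| ≤ |φ (W y k.1 x)| + |φ y| := abs_sub _ _
        have h2 := hA _ (W_mem hy k.1 x)
        have h3 := hA _ hymem
        linarith
      have hAnn : 0 ≤ 2 * A := le_trans (abs_nonneg _) hPh
      rw [abs_mul]
      have := mul_le_mul hPh habs (abs_nonneg _) hAnn
      linarith)
  simp only [W_top] at key
  refine le_trans key (Finset.sum_le_sum ?_)
  intro i _
  have h1 : y i * (1 - y i) ≤ 1 := by nlinarith [(hy i).1, (hy i).2, sq_nonneg (y i - 1/2)]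
  have h2 : 0 ≤ y i * (1 - y i) := by nlinarith [(hy i).1, (hy i).2]
  nlinarith [sq_nonneg (B i)]

noncomputable def ell (y : Fin n → ℝ) (i : Fin n) (b : Bool) : ℝ :=
  if b then Real.log (y i) else Real.log (1 - y i)

lemma pr_le_exp {y : Fin n → ℝ} (hy : ∀ i, y i ∈ Set.Icc (0:ℝ) 1) (x : Fin n → Bool) :
    pr y x ≤ Real.exp (∑ i, ell y i (x i)) := by
  rw [Real.exp_sum]
  unfold pr
  apply Finset.prod_le_prod
  · intro i _
    rcases hy i with ⟨h0, h1⟩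
    cases x i <;> simp [w] <;> linarith
  · intro i _
    have hw : ell y i (x i) = Real.log (w y i (x i)) := by
      cases x i <;> simp [w, ell]
    rw [hw]
    have hwnn : 0 ≤ w y i (x i) := by
      rcases hy i with ⟨h0, h1⟩
      cases x i <;> simp [w] <;> linarith
    rcases eq_or_lt_of_le hwnn with h | h
    · rw [← h]; positivity
    · rw [Real.exp_log h]

lemma log_le_div_e {x : ℝ} (hx : 0 < x) : Real.log x ≤ x / Real.exp 1 := by
  have he : (0:ℝ) < Real.exp 1 := Real.exp_pos 1
  have h1 : Real.log (x / Real.exp 1) ≤ x / Real.exp 1 - 1 :=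
    Real.log_le_sub_one_of_pos (by positivity)
  rw [Real.log_div (ne_of_gt hx) (ne_of_gt he), Real.log_exp] at h1
  linarith

lemma mul_log_sq_le_one {q : ℝ} (hq : q ∈ Set.Icc (0:ℝ) 1) :
    q * (Real.log q)^2 ≤ 1 := by
  rcases eq_or_lt_of_le hq.1 with h0 | h0
  · rw [← h0]; norm_num
  · set u := Real.sqrt q with hu
    have hupos : 0 < u := Real.sqrt_pos.2 h0
    have husq : u^2 = q := Real.sq_sqrt (le_of_lt h0)
    have hlogq : Real.log q = 2 * Real.log u := by
      rw [← husq, Real.log_pow]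
      push_cast; ring
    have hule : u ≤ 1 := by
      rw [hu]
      calc Real.sqrt q ≤ Real.sqrt 1 := Real.sqrt_le_sqrt hq.2
        _ = 1 := Real.sqrt_one
    have hlogu : Real.log u ≤ 0 := Real.log_nonpos (le_of_lt hupos) hule
    -- lower bound : -u log u ≤ 1/e
    have he : (0:ℝ) < Real.exp 1 := Real.exp_pos 1
    have hkey : -(u * Real.log u) ≤ 1 / Real.exp 1 := by
      have h1 : Real.log (1/u) ≤ (1/u) / Real.exp 1 := log_le_div_e (by positivity)
      have h2 : Real.log (1/u) = - Real.log u := by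
        rw [one_div, Real.log_inv]
      rw [h2] at h1
      have h3 : u * (- Real.log u) ≤ u * ((1/u) / Real.exp 1) :=
        mul_le_mul_of_nonneg_left h1 (le_of_lt hupos)
      have h4 : u * ((1/u) / Real.exp 1) = 1 / Real.exp 1 := by
        field_simp
      linarith
    have he2 : (2:ℝ) ≤ Real.exp 1 := by
      have := Real.add_one_le_exp 1
      linarith
    have habs : (u * Real.log u)^2 ≤ (1 / Real.exp 1)^2 := by
      have hub : u * Real.log u ≤ 0 :=
        mul_nonpos_of_nonneg_of_nonpos (le_of_lt hupos) hlogu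
      nlinarith
    have hq4 : (1 / Real.exp 1)^2 ≤ 1/4 := by
      rw [div_pow, one_pow]
      rw [div_le_div_iff₀ (by positivity) (by norm_num)]
      nlinarith
    calc q * (Real.log q)^2 = u^2 * (2 * Real.log u)^2 := by rw [husq, hlogq]
      _ = 4 * (u * Real.log u)^2 := by ring
      _ ≤ 4 * (1/4) := by nlinarith
      _ = 1 := by norm_num

lemma varterm_le_four {p : ℝ} (hp : p ∈ Set.Icc (0:ℝ) 1) :
    p * (1 - p) * (Real.log p - Real.log (1 - p))^2 ≤ 4 := by
  have h1 : p * (Real.log p)^2 ≤ 1 := mul_log_sq_le_one hp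
  have h2 : (1 - p) * (Real.log (1 - p))^2 ≤ 1 :=
    mul_log_sq_le_one ⟨by linarith [hp.2], by linarith [hp.1]⟩
  have hp0 := hp.1
  have hp1 := hp.2
  set a := Real.log p
  set b := Real.log (1 - p)
  have hs : (a - b)^2 ≤ 2*a^2 + 2*b^2 := by nlinarith [sq_nonneg (a + b)]
  have hpq : 0 ≤ p * (1 - p) := mul_nonneg hp0 (by linarith)
  have h3 : p*(1-p)*(a-b)^2 ≤ p*(1-p)*(2*a^2+2*b^2) :=
    mul_le_mul_of_nonneg_left hs hpq
  have h4 : p*(1-p)*(2*a^2+2*b^2) = 2*(1-p)*(p*a^2) + 2*p*((1-p)*b^2) := by ring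
  have h5 : 2*(1-p)*(p*a^2) ≤ 2*(1-p)*1 :=
    mul_le_mul_of_nonneg_left h1 (by linarith)
  have h6 : 2*p*((1-p)*b^2) ≤ 2*p*1 :=
    mul_le_mul_of_nonneg_left h2 (by linarith)
  linarith

/-- Second moment of the log-likelihood. -/
lemma entmom {y : Fin n → ℝ} (hy : ∀ i, y i ∈ Set.Icc (0:ℝ) 1) :
    ∑ x : Fin n → Bool, pr y x *
      ((∑ i, ell y i (x i)) - ∑ i, (y i * Real.log (y i) + (1 - y i) * Real.log (1 - y i)))^2
      ≤ 4 * n := by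
  set m : Fin n → ℝ := fun i => y i * Real.log (y i) + (1 - y i) * Real.log (1 - y i) with hm
  have hfiltop : Finset.univ.filter (fun i : Fin n => (i:ℕ) < n) = Finset.univ := by
    apply Finset.filter_true_of_mem
    intro i _
    exact i.isLt
  have hfilsucc : ∀ k : Fin n, Finset.univ.filter (fun i : Fin n => (i:ℕ) < k.1 + 1)
      = insert k (Finset.univ.filter (fun i : Fin n => (i:ℕ) < k.1)) := by
    intro k
    ext i
    simp only [Finset.mem_filter, Finset.mem_insert, Finset.mem_univ, true_and]
    constructor
    · intro hlt
      rcases Nat.lt_succ_iff_lt_or_eq.1 hlt with hcase | hcase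
      · exact Or.inr hcase
      · exact Or.inl (Fin.ext hcase)
    · rintro (rfl | hlt)
      · exact Nat.lt_succ_self _
      · exact Nat.lt_succ_of_lt hlt
  have hknotmem : ∀ k : Fin n, k ∉ Finset.univ.filter (fun i : Fin n => (i:ℕ) < k.1) := by
    intro k hk
    rw [Finset.mem_filter] at hk
    exact lt_irrefl _ hk.2
  have hdepterm : ∀ (k : Fin n) (x : Fin n → Bool) (b : Bool),
      (∑ i ∈ Finset.univ.filter (fun i : Fin n => (i:ℕ) < k.1),
        (ell y i (Function.update x k b i) - m i))
      = ∑ i ∈ Finset.univ.filter (fun i : Fin n => (i:ℕ) < k.1), (ell y i (x i) - m i) := by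
    intro k x b
    apply Finset.sum_congr rfl
    intro i hi
    rw [Finset.mem_filter] at hi
    have hik : i ≠ k := fun h => by subst h; exact lt_irrefl _ hi.2
    rw [Function.update_of_ne hik]
  have key := tele hy
    (fun k x => ∑ i ∈ Finset.univ.filter (fun i : Fin n => (i:ℕ) < k),
      (ell y i (x i) - m i))
    (fun k => |Real.log (y k) - Real.log (1 - y k)|) (fun _ => 0)
    (fun x => by simp)
    (fun k x b => by
      show (∑ i ∈ Finset.univ.filter (fun i : Fin n => (i:ℕ) < k.1),
          (ell y i (Function.update x k b i) - m i))
        = ∑ i ∈ Finset.univ.filter (fun i : Fin n => (i:ℕ) < k.1), (ell y i (x i) - m i)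
      exact hdepterm k x b)
    (fun k x => by
      show |(∑ i ∈ Finset.univ.filter (fun i : Fin n => (i:ℕ) < k.1 + 1),
            (ell y i (x i) - m i))
          - ∑ i ∈ Finset.univ.filter (fun i : Fin n => (i:ℕ) < k.1), (ell y i (x i) - m i)|
        ≤ |Real.log (y k) - Real.log (1 - y k)| * |boolToReal x k - y k|
      rw [hfilsucc k, Finset.sum_insert (hknotmem k)]
      have e1 : (ell y k (x k) - m k)
          + (∑ i ∈ Finset.univ.filter (fun i : Fin n => (i:ℕ) < k.1), (ell y i (x i) - m i))
          - (∑ i ∈ Finset.univ.filter (fun i : Fin n => (i:ℕ) < k.1), (ell y i (x i) - m i))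
          = ell y k (x k) - m k := by ring
      rw [e1]
      rw [← abs_mul]
      cases hxk : x k
      · have : ell y k false - m k
            = (Real.log (y k) - Real.log (1 - y k)) * (boolToReal x k - y k) := by
          unfold boolToReal
          rw [hxk, hm]
          simp [ell]
          ring
        rw [this]
      · have : ell y k true - m k
            = (Real.log (y k) - Real.log (1 - y k)) * (boolToReal x k - y k) := by
          unfold boolToReal
          rw [hxk, hm]
          simp [ell]
          ring
        rw [this])
    (fun k x => by
      show |(∑ i ∈ Finset.univ.filter (fun i : Fin n => (i:ℕ) < k.1),
            (ell y i (x i) - m i)) *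
          (y k * (∑ i ∈ Finset.univ.filter (fun i : Fin n => (i:ℕ) < k.1 + 1),
              (ell y i (Function.update x k true i) - m i))
            + (1 - y k) * (∑ i ∈ Finset.univ.filter (fun i : Fin n => (i:ℕ) < k.1 + 1),
              (ell y i (Function.update x k false i) - m i))
            - ∑ i ∈ Finset.univ.filter (fun i : Fin n => (i:ℕ) < k.1),
              (ell y i (x i) - m i))| ≤ 0
      have et : (∑ i ∈ Finset.univ.filter (fun i : Fin n => (i:ℕ) < k.1 + 1),
          (ell y i (Function.update x k true i) - m i))
          = (ell y k true - m k)
            + ∑ i ∈ Finset.univ.filter (fun i : Fin n => (i:ℕ) < k.1), (ell y i (x i) - m i) := by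
        rw [hfilsucc k, Finset.sum_insert (hknotmem k), Function.update_self,
          hdepterm k x true]
      have ef : (∑ i ∈ Finset.univ.filter (fun i : Fin n => (i:ℕ) < k.1 + 1),
          (ell y i (Function.update x k false i) - m i))
          = (ell y k false - m k)
            + ∑ i ∈ Finset.univ.filter (fun i : Fin n => (i:ℕ) < k.1), (ell y i (x i) - m i) := by
        rw [hfilsucc k, Finset.sum_insert (hknotmem k), Function.update_self,
          hdepterm k x false]
      rw [et, ef]
      have hz : y k * ((ell y k true - m k)
            + ∑ i ∈ Finset.univ.filter (fun i : Fin n => (i:ℕ) < k.1), (ell y i (x i) - m i))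
          + (1 - y k) * ((ell y k false - m k)
            + ∑ i ∈ Finset.univ.filter (fun i : Fin n => (i:ℕ) < k.1), (ell y i (x i) - m i))
          - ∑ i ∈ Finset.univ.filter (fun i : Fin n => (i:ℕ) < k.1), (ell y i (x i) - m i)
          = 0 := by
        rw [hm]
        simp [ell]
        ring
      rw [hz, mul_zero, abs_zero])
  simp only [hfiltop, Finset.sum_sub_distrib] at key
  refine le_trans key ?_
  have hterm : ∀ k : Fin n,
      |Real.log (y k) - Real.log (1 - y k)|^2 * (y k * (1 - y k)) + 2 * 0 ≤ 4 := by
    intro k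
    have := varterm_le_four (hy k)
    rw [sq_abs]
    nlinarith
  calc ∑ k : Fin n, (|Real.log (y k) - Real.log (1 - y k)|^2 * (y k * (1 - y k)) + 2 * 0)
      ≤ ∑ _k : Fin n, (4:ℝ) := Finset.sum_le_sum (fun k _ => hterm k)
    _ = 4 * n := by
        rw [Finset.sum_const, Finset.card_univ, Fintype.card_fin]
        ring

end CNLB


open CNLB in
theorem conditional_normalization_lower_bound (n : ℕ) (hn : 1 ≤ n)
    (f h : (Fin n → ℝ) → ℝ) (hf : ContDiff ℝ 2 f) (hh : ContDiff ℝ 2 h)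
    (a : ℝ) (b c : Fin n → ℝ) (α : ℝ) (β γ : Fin n → ℝ)
    (ha : ∀ x ∈ Set.Icc (0 : Fin n → ℝ) 1, |f x| ≤ a)
    (hb : ∀ x ∈ Set.Icc (0 : Fin n → ℝ) 1, ∀ i, |fderiv ℝ f x (Pi.single i 1)| ≤ b i)
    (hc : ∀ x ∈ Set.Icc (0 : Fin n → ℝ) 1, ∀ i,
      |fderiv ℝ (fun z => fderiv ℝ f z (Pi.single i 1)) x (Pi.single i 1)| ≤ c i)
    (hα : ∀ x ∈ Set.Icc (0 : Fin n → ℝ) 1, |h x| ≤ α)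
    (hβ : ∀ x ∈ Set.Icc (0 : Fin n → ℝ) 1, ∀ i, |fderiv ℝ h x (Pi.single i 1)| ≤ β i)
    (hγ : ∀ x ∈ Set.Icc (0 : Fin n → ℝ) 1, ∀ i,
      |fderiv ℝ (fun z => fderiv ℝ h z (Pi.single i 1)) x (Pi.single i 1)| ≤ γ i)
    (t : ℝ) (ht : 0 < t)
    (δ₀ ε₀ η₀ : ℝ)
    (hδ₀ : δ₀ = Real.sqrt 6 / n * Real.sqrt (∑ i, (α * γ i + (β i)^2)))
    (hε₀ : ε₀ = 2 * Real.sqrt (6 / n))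
    (hη₀ : η₀ = Real.sqrt 6 / n * Real.sqrt (∑ i, (a * c i + (b i)^2)))
    (I : (Fin n → ℝ) → ℝ)
    (hI : ∀ x, I x = ∑ i, (x i * Real.log (x i) + (1 - x i) * Real.log (1 - x i)))
    (hne : ({x ∈ Set.Icc (0 : Fin n → ℝ) 1 | |h x| ≤ (t - δ₀) * n}).Nonempty) :
    sSup ((fun x => f x - I x) ''
        {x ∈ Set.Icc (0 : Fin n → ℝ) 1 | |h x| ≤ (t - δ₀) * n})
      - ε₀ * n - η₀ * n - Real.log 2 ≤
    Real.log (∑ x ∈ Finset.univ.filter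
        (fun x : Fin n → Bool => |h (boolToReal x)| ≤ t * n),
      Real.exp (f (boolToReal x))) := by
  have hn' : (0:ℝ) < n := by exact_mod_cast hn
  set S : ℝ := ∑ x ∈ Finset.univ.filter
      (fun x : Fin n → Bool => |h (boolToReal x)| ≤ t * n),
    Real.exp (f (boolToReal x)) with hS
  -- main claim for each point of the region
  have main : ∀ y ∈ {x ∈ Set.Icc (0 : Fin n → ℝ) 1 | |h x| ≤ (t - δ₀) * n},
      f y - I y ≤ Real.log S + ε₀ * n + η₀ * n + Real.log 2 := by
    rintro y ⟨hymem, hyh⟩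
    have hy : ∀ i, y i ∈ Set.Icc (0:ℝ) 1 := fun i => ⟨hymem.1 i, hymem.2 i⟩
    -- constants
    set Vh : ℝ := ∑ i, (α * γ i + (β i)^2) with hVh
    set Vf : ℝ := ∑ i, (a * c i + (b i)^2) with hVf
    have hα0 : 0 ≤ α := le_trans (abs_nonneg _) (hα y hymem)
    have ha0 : 0 ≤ a := le_trans (abs_nonneg _) (ha y hymem)
    have hVh0 : 0 ≤ Vh := Finset.sum_nonneg (fun i _ =>
      add_nonneg (mul_nonneg hα0 (le_trans (abs_nonneg _) (hγ y hymem i))) (sq_nonneg _))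
    have hVf0 : 0 ≤ Vf := Finset.sum_nonneg (fun i _ =>
      add_nonneg (mul_nonneg ha0 (le_trans (abs_nonneg _) (hc y hymem i))) (sq_nonneg _))
    -- threshold identities
    have hδn : δ₀ * n = Real.sqrt 6 * Real.sqrt Vh := by
      rw [hδ₀]; field_simp
    have hδsq : (δ₀ * n)^2 = 6 * Vh := by
      rw [hδn, mul_pow, Real.sq_sqrt (by norm_num : (6:ℝ) ≥ 0), Real.sq_sqrt hVh0]
    have hδ0 : 0 ≤ δ₀ * n := by
      rw [hδn]; positivity
    have hηn : η₀ * n = Real.sqrt 6 * Real.sqrt Vf := by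
      rw [hη₀]; field_simp
    have hηsq : (η₀ * n)^2 = 6 * Vf := by
      rw [hηn, mul_pow, Real.sq_sqrt (by norm_num : (6:ℝ) ≥ 0), Real.sq_sqrt hVf0]
    have hη0 : 0 ≤ η₀ * n := by
      rw [hηn]; positivity
    have hεsq : (ε₀ * n)^2 = 24 * n := by
      rw [hε₀, mul_pow, mul_pow, Real.sq_sqrt (by positivity : (0:ℝ) ≤ 6 / n)]
      field_simp
      ring
    have hε0 : 0 ≤ ε₀ * n := by
      rw [hε₀]; positivity
    -- second moments
    have Mh := secmom hy h hh α β γ hα hβ hγ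
    have Mf := secmom hy f hf a b c ha hb hc
    have ML := entmom hy
    set Ient : ℝ := ∑ i, (y i * Real.log (y i) + (1 - y i) * Real.log (1 - y i)) with hIent
    -- Chebyshev
    have cheb1 := cheb hy (fun x => h (boolToReal x) - h y) Vh (δ₀ * n) hδ0 Mh
      (le_of_eq hδsq.symm)
    have cheb2 := cheb hy (fun x => f (boolToReal x) - f y) Vf (η₀ * n) hη0 Mf
      (le_of_eq hηsq.symm)
    have cheb3 := cheb hy (fun x => (∑ i, ell y i (x i)) - Ient) (4 * n) (ε₀ * n) hε0 ML
      (by rw [hεsq]; ring_nf; exact le_refl _)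
    -- good event
    set P : (Fin n → Bool) → Prop := fun x =>
      |h (boolToReal x) - h y| ≤ δ₀ * n ∧ |f (boolToReal x) - f y| ≤ η₀ * n ∧
        |(∑ i, ell y i (x i)) - Ient| ≤ ε₀ * n with hP
    have hPdec : DecidablePred P := fun x => Classical.dec _
    set good : Finset (Fin n → Bool) := Finset.univ.filter P with hgood
    -- mass of good event
    have hmass : (1:ℝ)/2 ≤ ∑ x ∈ good, pr y x := by
      have hsplit := Finset.sum_filter_add_sum_filter_not Finset.univ P (pr y)
      have hsub : Finset.univ.filter (fun x => ¬ P x) ⊆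
          (Finset.univ.filter (fun x => δ₀ * n < |h (boolToReal x) - h y|)
            ∪ Finset.univ.filter (fun x => η₀ * n < |f (boolToReal x) - f y|))
            ∪ Finset.univ.filter (fun x => ε₀ * n < |(∑ i, ell y i (x i)) - Ient|) := by
        intro x hx
        rw [Finset.mem_filter] at hx
        obtain ⟨-, hx⟩ := hx
        simp only [hP] at hx
        push_neg at hx
        simp only [Finset.mem_union, Finset.mem_filter, Finset.mem_univ, true_and]
        by_cases h1 : |h (boolToReal x) - h y| ≤ δ₀ * n
        · by_cases h2 : |f (boolToReal x) - f y| ≤ η₀ * n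
          · exact Or.inr (hx h1 h2)
          · exact Or.inl (Or.inr (lt_of_not_ge h2))
        · exact Or.inl (Or.inl (lt_of_not_ge h1))
      have hUle : ∀ s u : Finset (Fin n → Bool),
          ∑ x ∈ s ∪ u, pr y x ≤ ∑ x ∈ s, pr y x + ∑ x ∈ u, pr y x := by
        intro s u
        have h1 := Finset.sum_union_inter (s₁ := s) (s₂ := u) (f := pr y)
        have h2 : 0 ≤ ∑ x ∈ s ∩ u, pr y x :=
          Finset.sum_nonneg (fun x _ => pr_nonneg hy x)
        linarith
      have hbadle : ∑ x ∈ Finset.univ.filter (fun x => ¬ P x), pr y x ≤ 1/2 := by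
        have h1 : ∑ x ∈ Finset.univ.filter (fun x => ¬ P x), pr y x
            ≤ ∑ x ∈ ((Finset.univ.filter (fun x => δ₀ * n < |h (boolToReal x) - h y|)
              ∪ Finset.univ.filter (fun x => η₀ * n < |f (boolToReal x) - f y|))
              ∪ Finset.univ.filter (fun x => ε₀ * n < |(∑ i, ell y i (x i)) - Ient|)), pr y x :=
          Finset.sum_le_sum_of_subset_of_nonneg hsub (fun x _ _ => pr_nonneg hy x)
        have h2 := hUle (Finset.univ.filter (fun x => δ₀ * n < |h (boolToReal x) - h y|)
              ∪ Finset.univ.filter (fun x => η₀ * n < |f (boolToReal x) - f y|))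
            (Finset.univ.filter (fun x => ε₀ * n < |(∑ i, ell y i (x i)) - Ient|))
        have h3 := hUle (Finset.univ.filter (fun x => δ₀ * n < |h (boolToReal x) - h y|))
            (Finset.univ.filter (fun x => η₀ * n < |f (boolToReal x) - f y|))
        linarith
      have htot := sum_pr y
      linarith
    -- good points satisfy the constraint
    have hgoodsub : good ⊆ Finset.univ.filter
        (fun x : Fin n → Bool => |h (boolToReal x)| ≤ t * n) := by
      intro x hx
      rw [hgood, Finset.mem_filter] at hx
      rw [Finset.mem_filter]
      refine ⟨Finset.mem_univ x, ?_⟩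
      have h1 : |h (boolToReal x)| ≤ |h (boolToReal x) - h y| + |h y| := by
        have := abs_add_le (h (boolToReal x) - h y) (h y)
        simpa using this
      have h2 := hx.2.1
      have h3 : (t - δ₀) * n + δ₀ * n = t * n := by ring
      linarith
    -- pointwise exponential bound on good points
    set c₀ : ℝ := f y - Ient - η₀ * n - ε₀ * n with hc₀
    have hpt : ∀ x ∈ good, Real.exp c₀ * pr y x ≤ Real.exp (f (boolToReal x)) := by
      intro x hx
      rw [hgood, Finset.mem_filter] at hx
      obtain ⟨-, h1, h2, h3⟩ := hx
      have hprle := pr_le_exp hy x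
      have hsum : c₀ + (∑ i, ell y i (x i)) ≤ f (boolToReal x) := by
        have e1 : f y - η₀ * n ≤ f (boolToReal x) := by
          have := abs_le.1 h2
          linarith [this.1]
        have e2 : (∑ i, ell y i (x i)) - Ient ≤ ε₀ * n := (abs_le.1 h3).2
        rw [hc₀]
        linarith
      calc Real.exp c₀ * pr y x ≤ Real.exp c₀ * Real.exp (∑ i, ell y i (x i)) := by
            apply mul_le_mul_of_nonneg_left hprle (le_of_lt (Real.exp_pos c₀))
        _ = Real.exp (c₀ + ∑ i, ell y i (x i)) := by rw [← Real.exp_add]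
        _ ≤ Real.exp (f (boolToReal x)) := Real.exp_le_exp.2 hsum
    -- lower bound for S
    have hSlb : Real.exp c₀ * (1/2) ≤ S := by
      calc Real.exp c₀ * (1/2) ≤ Real.exp c₀ * ∑ x ∈ good, pr y x := by
            apply mul_le_mul_of_nonneg_left hmass (le_of_lt (Real.exp_pos c₀))
        _ = ∑ x ∈ good, Real.exp c₀ * pr y x := by rw [Finset.mul_sum]
        _ ≤ ∑ x ∈ good, Real.exp (f (boolToReal x)) := Finset.sum_le_sum hpt
        _ ≤ S := Finset.sum_le_sum_of_subset_of_nonneg hgoodsub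
            (fun x _ _ => le_of_lt (Real.exp_pos _))
    have hSpos : 0 < S := lt_of_lt_of_le (by positivity) hSlb
    have hlog : c₀ - Real.log 2 ≤ Real.log S := by
      have h1 : Real.log (Real.exp c₀ * (1/2)) ≤ Real.log S :=
        Real.log_le_log (by positivity) hSlb
      rw [Real.log_mul (Real.exp_ne_zero c₀) (by norm_num), Real.log_exp,
        one_div, Real.log_inv] at h1
      linarith
    have hIy : I y = Ient := by rw [hI y, hIent]
    rw [hIy, hc₀] at *
    linarith
  have hsup := csSup_le (hne.image _) (fun v hv => by
    obtain ⟨y, hy, rfl⟩ := hv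
    exact main y hy)
  linarith
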